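/- Let A, B₁, B₂ be groups with embeddings φᵢ : A → Bᵢ, each equipped with descending chains of normal subgroups (P_nA), (P_nBᵢ) such that φᵢ(P_nA) = P_nBᵢ ∩ φᵢ(A). Let C = B₁ *_A B₂ be the amalgamated free product, and let P_nC be the normal closure in C of the subgroup generated by P_nB₁ and P_nB₂. Then P_nC ∩ Bᵢ = P_nBᵢ for all n and i = 1,2. -/
import Mathlib


open Monoid

/-- Amalgamation property (IV): for compatible descending chains of normal subgroups on
`A, B₁, B₂`, the normal closure `PₙC` of `⟨PₙB₁, PₙB₂⟩` in the amalgamated free product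
`C = B₁ *_A B₂` satisfies `PₙC ∩ Bᵢ = PₙBᵢ`. -/
theorem amalgam_chain_intersection
    {A : Type*} [Group A] {B : Fin 2 → Type*} [∀ i, Group (B i)]
    (φ : ∀ i, A →* B i) (hφ : ∀ i, Function.Injective (φ i))
    (PA : ℕ → Subgroup A) (PB : ∀ i, ℕ → Subgroup (B i))
    (hPAnormal : ∀ n, (PA n).Normal) (hPBnormal : ∀ i n, (PB i n).Normal)
    (hPAdesc : ∀ n, PA (n + 1) ≤ PA n) (hPBdesc : ∀ i n, PB i (n + 1) ≤ PB i n)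
    (hPA0 : PA 0 = ⊤) (hPB0 : ∀ i, PB i 0 = ⊤)
    (hcompat : ∀ i n, (PA n).map (φ i) = PB i n ⊓ (φ i).range) :
    ∀ (n : ℕ) (i : Fin 2),
      Subgroup.comap (PushoutI.of (φ := φ) i)
          (Subgroup.normalClosure
            (⋃ j : Fin 2, (PushoutI.of (φ := φ) j) '' (PB j n : Set (B j)))) =
        PB i n := by
  intro n i
  haveI := hPAnormal n
  haveI := fun i => hPBnormal i n
  -- map of subgroups: φ i maps PA n into PB i n
  have hle : ∀ i, PA n ≤ (PB i n).comap (φ i) := by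
    intro i a ha
    have : φ i a ∈ (PA n).map (φ i) := ⟨a, ha, rfl⟩
    rw [hcompat i n] at this
    exact this.1
  -- induced maps on quotients
  let φq : ∀ i, A ⧸ PA n →* B i ⧸ PB i n := fun i =>
    QuotientGroup.map (PA n) (PB i n) (φ i) (hle i)
  have hφq : ∀ i, Function.Injective (φq i) := by
    intro i
    rw [← MonoidHom.ker_eq_bot_iff, eq_bot_iff]
    intro x hx
    obtain ⟨a, rfl⟩ := QuotientGroup.mk_surjective x
    have : φ i a ∈ PB i n := by
      rwa [MonoidHom.mem_ker, QuotientGroup.map_mk, QuotientGroup.eq_one_iff] at hx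
    have hmem : φ i a ∈ PB i n ⊓ (φ i).range := ⟨this, ⟨a, rfl⟩⟩
    rw [← hcompat i n] at hmem
    obtain ⟨a', ha', heq⟩ := hmem
    have : a' = a := hφ i heq
    subst this
    simpa [Subgroup.mem_bot, QuotientGroup.eq_one_iff] using ha'
  -- the induced hom from the pushout to the quotient pushout
  let f : PushoutI φ →* PushoutI φq :=
    PushoutI.lift
      (fun i => (PushoutI.of (φ := φq) i).comp (QuotientGroup.mk' (PB i n)))
      ((PushoutI.base φq).comp (QuotientGroup.mk' (PA n)))
      (by
        intro i
        ext a
        show PushoutI.of (φ := φq) i ((φ i a : B i)) = PushoutI.base φq (a : A ⧸ PA n)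
        have : ((φ i a : B i) : B i ⧸ PB i n) = φq i (a : A ⧸ PA n) := rfl
        rw [this, PushoutI.of_apply_eq_base])
  have hf_of : ∀ (j : Fin 2) (b : B j),
      f (PushoutI.of (φ := φ) j b) = PushoutI.of (φ := φq) j (b : B j ⧸ PB j n) := by
    intro j b
    simp [f, PushoutI.lift_of]
  -- normal closure is contained in ker f
  have hker : Subgroup.normalClosure
      (⋃ j : Fin 2, (PushoutI.of (φ := φ) j) '' (PB j n : Set (B j))) ≤ f.ker := by
    apply Subgroup.normalClosure_le_normal
    rintro x hx
    simp only [Set.mem_iUnion, Set.mem_image] at hx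
    obtain ⟨j, b, hb, rfl⟩ := hx
    rw [SetLike.mem_coe, MonoidHom.mem_ker, hf_of]
    have : ((b : B j) : B j ⧸ PB j n) = 1 := (QuotientGroup.eq_one_iff b).2 hb
    rw [this, map_one]
  apply le_antisymm
  · intro b hb
    rw [Subgroup.mem_comap] at hb
    have h1 : f (PushoutI.of (φ := φ) i b) = 1 := hker hb
    rw [hf_of] at h1
    have h2 : ((b : B i) : B i ⧸ PB i n) = 1 := by
      apply PushoutI.of_injective hφq i
      rw [h1, map_one]
    exact (QuotientGroup.eq_one_iff b).1 h2
  · intro b hb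
    rw [Subgroup.mem_comap]
    apply Subgroup.subset_normalClosure
    exact Set.mem_iUnion.2 ⟨i, ⟨b, hb, rfl⟩⟩
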